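/- Let η be a constant symmetric nondegenerate N×N matrix, K = η∂_x, and let u^α ↦ ũ^α(u) be a Miura transformation satisfying ∂ũ^α(u)/∂u^1 = δ^{α,1}. Then the transformed operator K_ũ, with (K_ũ)^{αβ} = Σ_{p,q≥0} (∂ũ^α(u)/∂u^μ_p) ∂_x^p ∘ η^{μν}∂_x ∘ (−∂_x)^q ∘ (∂ũ^β(u)/∂u^ν_q), is independent of ũ^1: all of its coefficients, written as differential polynomials in the variables ũ, are annihilated by ∂/∂ũ^1. -/

import Mathlib

/-!
Common formal framework for the theory of differential polynomials, local
functionals and tau-structures, following Buryak–Dubrovin–Guéré–Rossi.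

Variables of the algebra of differential polynomials: `Sum.inl (α, i)` stands
for `u^α_i` (with `u^α = u^α_0`) and `Sum.inr ()` stands for `ε`.  The paper's
index `1` (the unit direction) corresponds to `(0 : Fin N)` here.
-/

/-- The variables of the algebra of differential polynomials. -/
abbrev DVar (N : ℕ) : Type := (Fin N × ℕ) ⊕ Unit

/-- The ring `Â_N` of (extended) differential polynomials, realized inside the
ring of formal power series in the variables `u^α_i` and `ε`. -/
abbrev DP (N : ℕ) : Type := MvPowerSeries (DVar N) ℂ

namespace DP

variable {N : ℕ}

/-- Coefficient of a monomial. -/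
noncomputable def co (f : DP N) (m : DVar N →₀ ℕ) : ℂ :=
  MvPowerSeries.coeff m f

/-- Build a power series from its coefficients. -/
def ofCo (F : (DVar N →₀ ℕ) → ℂ) : DP N := F

/-- The variable `u^α_i`. -/
noncomputable def uv (α : Fin N) (i : ℕ) : DP N :=
  MvPowerSeries.X (Sum.inl (α, i))

/-- The variable `ε`. -/
noncomputable def eps : DP N := MvPowerSeries.X (Sum.inr ())

/-- The partial derivative `∂/∂v` with respect to one of the variables. -/
noncomputable def pd (v : DVar N) (f : DP N) : DP N :=
  ofCo fun m => ((m v : ℂ) + 1) * co f (m + Finsupp.single v 1)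

/-- The spatial derivative `∂_x = Σ_{α,i} u^α_{i+1} ∂/∂u^α_i`. -/
noncomputable def dx (f : DP N) : DP N :=
  ofCo fun m =>
    ∑ v ∈ m.support,
      (match v with
        | Sum.inl (α, i + 1) =>
            co (pd (Sum.inl (α, i)) f) (m - Finsupp.single (Sum.inl (α, i + 1)) 1)
        | _ => (0 : ℂ))

/-- The variational derivative `δ/δu^μ = Σ_{i≥0} (−∂_x)^i ∘ ∂/∂u^μ_i`. -/
noncomputable def vd (μ : Fin N) (f : DP N) : DP N :=
  ofCo fun m => ∑ᶠ i : ℕ, ((-1 : ℂ) ^ i) * co (dx^[i] (pd (Sum.inl (μ, i)) f)) m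

/-- The weighted degree of a monomial: `deg u^α_i = i`, `deg ε = −1`. -/
noncomputable def wdeg (m : DVar N →₀ ℕ) : ℤ :=
  ∑ v ∈ m.support,
    (match v with
      | Sum.inl (_, i) => (i : ℤ)
      | Sum.inr _ => (-1 : ℤ)) * (m v : ℤ)

/-- Degree-`k` homogeneity (membership in `Â_N^{[k]}`). -/
def IsHomog (k : ℤ) (f : DP N) : Prop :=
  ∀ m, co f m ≠ 0 → wdeg m = k

/-- Being a constant, i.e. an element of `ℂ[[ε]]`. -/
def IsConst (f : DP N) : Prop :=
  ∀ m, co f m ≠ 0 → ∀ v ∈ m.support, v = Sum.inr ()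

/-- Vanishing of the evaluation at `u^*_* = 0`. -/
def VanishAtU0 (f : DP N) : Prop :=
  ∀ k : ℕ, co f (Finsupp.single (Sum.inr ()) k) = 0

/-- Being a genuine differential polynomial: in each ε-degree at most `e`,
polynomiality (bounded degree, boundedly many variables) in the jet
variables `u^α_i`, `i ≥ 1`. -/
def IsDiffPoly (f : DP N) : Prop :=
  ∀ e : ℕ, ∃ D : ℕ, ∀ m, co f m ≠ 0 → m (Sum.inr ()) ≤ e →
    ((∑ v ∈ m.support,
        (match v with
          | Sum.inl (_, _ + 1) => m v
          | _ => 0)) ≤ D) ∧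
      ∀ (α : Fin N) (i : ℕ), D < i → m (Sum.inl (α, i)) = 0

/-- The submodule of constants `ℂ[[ε]] ⊆ Â_N`. -/
noncomputable def constSub (N : ℕ) : Submodule ℂ (DP N) where
  carrier := {f | IsConst f}
  add_mem' := by
    intro f g hf hg m hm
    have hco : co (f + g) m = co f m + co g m := map_add _ _ _
    by_cases h1 : co f m = 0
    · have h2 : co g m ≠ 0 := by
        intro h2; exact hm (by rw [hco, h1, h2, add_zero])
      exact hg m h2
    · exact hf m h1
  zero_mem' := by
    intro m hm
    exact (hm (map_zero (MvPowerSeries.coeff (R := ℂ) m))).elim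
  smul_mem' := by
    intro c f hf m hm
    have hne : co f m ≠ 0 := by
      intro h
      apply hm
      have hsm : co (c • f) m = c * co f m := by
        simp [co]
      rw [hsm, h, mul_zero]
    exact hf m hne

/-- The submodule `ℂ[[ε]] + ∂_x(Â_N)` by which one quotients to get local
functionals. -/
noncomputable def lfSub (N : ℕ) : Submodule ℂ (DP N) :=
  constSub N ⊔ Submodule.span ℂ (Set.range (dx : DP N → DP N))

/-- The space `Λ̂_N` of local functionals. -/
abbrev LF (N : ℕ) := DP N ⧸ lfSub N

/-- The projection `f ↦ ∫ f dx`. -/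
noncomputable def intg : DP N →ₗ[ℂ] LF N := (lfSub N).mkQ

/-- A choice of density for a local functional. -/
noncomputable def rep (h : LF N) : DP N :=
  (Submodule.Quotient.mk_surjective (lfSub N) h).choose

/-- The variational derivative `δ/δu^μ` of a local functional. -/
noncomputable def vdQ (μ : Fin N) (h : LF N) : DP N := vd μ (rep h)

/-- The partial derivative `∂/∂v` of a local functional. -/
noncomputable def pdQ (v : DVar N) (h : LF N) : LF N := intg (pd v (rep h))

/-- The degree-`k` local functionals `Λ̂_N^{[k]}`. -/
noncomputable def LFHomog (N : ℕ) (k : ℤ) : Set (LF N) :=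
  intg '' {f : DP N | IsHomog k f ∧ IsDiffPoly f}

/-- The operator `K = η ∂_x` applied to a tuple of differential polynomials. -/
noncomputable def etaAp (η : Matrix (Fin N) (Fin N) ℂ) (α : Fin N)
    (g : Fin N → DP N) : DP N :=
  ∑ ν : Fin N, η α ν • dx (g ν)

/-- The bracket `{f̄, ḡ}_{η∂_x}` of local functionals. -/
noncomputable def lfbEta (η : Matrix (Fin N) (Fin N) ℂ) (f g : LF N) : LF N :=
  intg (∑ μ : Fin N, vdQ μ f * etaAp η μ fun ν => vdQ ν g)

/-- The bracket `{f, h̄}_{η∂_x}` of a differential polynomial with a local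
functional. -/
noncomputable def pbEta (η : Matrix (Fin N) (Fin N) ℂ) (f : DP N) (h : LF N) : DP N :=
  ofCo fun m => ∑ γ : Fin N, ∑ᶠ n : ℕ,
    co (pd (Sum.inl (γ, n)) f * dx^[n] (etaAp η γ fun μ => vdQ μ h)) m

/-- A general operator `K^{γν} = Σ_j K^{γν}_j ∂_x^j` applied to a tuple of
differential polynomials. -/
noncomputable def Kap (K : Fin N → Fin N → ℕ → DP N) (γ : Fin N)
    (g : Fin N → DP N) : DP N :=
  ∑ ν : Fin N, ofCo fun m => ∑ᶠ j : ℕ, co (K γ ν j * dx^[j] (g ν)) m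

/-- The bracket `{f̄, ḡ}_K` of local functionals. -/
noncomputable def lfbK (K : Fin N → Fin N → ℕ → DP N) (f g : LF N) : LF N :=
  intg (∑ μ : Fin N, vdQ μ f * Kap K μ fun ν => vdQ ν g)

/-- The bracket `{f, h̄}_K` of a differential polynomial with a local
functional. -/
noncomputable def pbK (K : Fin N → Fin N → ℕ → DP N) (f : DP N) (h : LF N) : DP N :=
  ofCo fun m => ∑ γ : Fin N, ∑ᶠ n : ℕ,
    co (pd (Sum.inl (γ, n)) f * dx^[n] (Kap K γ fun μ => vdQ μ h)) m

/-- Being a hamiltonian operator. -/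
structure IsHamOp (K : Fin N → Fin N → ℕ → DP N) : Prop where
  finite : ∀ γ ν, ∃ J : ℕ, ∀ j, J ≤ j → K γ ν j = 0
  deg : ∀ (γ ν : Fin N) (j : ℕ), IsHomog (1 - (j : ℤ)) (K γ ν j)
  poly : ∀ γ ν j, IsDiffPoly (K γ ν j)
  antisym : ∀ f g : LF N, lfbK K f g = -lfbK K g f
  jacobi : ∀ f g h : LF N,
    lfbK K (lfbK K f g) h + lfbK K (lfbK K g h) f + lfbK K (lfbK K h f) g = 0

/-- A hamiltonian hierarchy: a hamiltonian operator together with pairwise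
commuting Hamiltonians `h̄_{β,q} ∈ Λ̂^{[0]}_N` such that `h̄_{1,0}` generates the
spatial translations. -/
structure IsHierarchy [NeZero N] (K : Fin N → Fin N → ℕ → DP N)
    (H : Fin N → ℕ → LF N) : Prop where
  ham : IsHamOp K
  mem : ∀ β q, H β q ∈ LFHomog N 0
  comm : ∀ β q γ p, lfbK K (H β q) (H γ p) = 0
  transl : ∀ α, Kap K α (fun μ => vdQ μ (H 0 0)) = uv α 1

/-- A tau-structure for a hamiltonian hierarchy.  Here `h β q` denotes the
tau-symmetric density `h_{β,q-1}` (an index shift by one). -/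
structure IsTauStructure [NeZero N] (K : Fin N → Fin N → ℕ → DP N)
    (H : Fin N → ℕ → LF N) (h : Fin N → ℕ → DP N) : Prop where
  mem : ∀ β q, IsHomog 0 (h β q) ∧ IsDiffPoly (h β q)
  casimir : ∀ β α, Kap K α (fun μ => vdQ μ (intg (h β 0))) = 0
  indep : LinearIndependent ℂ fun β : Fin N => intg (h β 0)
  nondeg : Matrix.det (Matrix.of fun α β : Fin N => co (K α β 1) 0) ≠ 0
  dens : ∀ β q, intg (h β (q + 1)) = H β q
  tausym : ∀ α β p q, pbK K (h α p) (H β q) = pbK K (h β q) (H α p)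

end DP



namespace DP

variable {N : ℕ}

/-- The transformed operator `(K_ũ)^{αβ}` for `K = η∂_x`, acting on
differential polynomials:
`Σ_{p,q} (∂ũ^α/∂u^μ_p) ∂_x^p ∘ η^{μν}∂_x ∘ (−∂_x)^q ∘ (∂ũ^β/∂u^ν_q)`. -/
noncomputable def miuraEta (η : Matrix (Fin N) (Fin N) ℂ) (ut : Fin N → DP N)
    (α β : Fin N) (g : DP N) : DP N :=
  ofCo fun m => ∑ᶠ p : ℕ, ∑ᶠ q : ℕ,
    co (∑ μ : Fin N, ∑ ν : Fin N,
      pd (Sum.inl (μ, p)) (ut α) *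
        dx^[p] (η μ ν •
          dx (((-1 : ℂ) ^ q) • dx^[q] (pd (Sum.inl (ν, q)) (ut β) * g)))) m

lemma co_apply (f : DP N) (m : DVar N →₀ ℕ) : co f m = f m := rfl

lemma co_pd (v : DVar N) (f : DP N) (m : DVar N →₀ ℕ) :
    co (pd v f) m = ((m v : ℂ) + 1) * co f (m + Finsupp.single v 1) := rfl

lemma co_dx (f : DP N) (m : DVar N →₀ ℕ) :
    co (dx f) m = ∑ v ∈ m.support,
      (match v with
        | Sum.inl (α, i + 1) =>
            co (pd (Sum.inl (α, i)) f) (m - Finsupp.single (Sum.inl (α, i + 1)) 1)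
        | _ => (0 : ℂ)) := rfl

lemma pd_add (v : DVar N) (f g : DP N) : pd v (f + g) = pd v f + pd v g := by
  funext m
  show ((m v : ℂ) + 1) * co (f + g) (m + Finsupp.single v 1)
      = ((m v : ℂ) + 1) * co f (m + Finsupp.single v 1)
        + ((m v : ℂ) + 1) * co g (m + Finsupp.single v 1)
  have h : co (f + g) (m + Finsupp.single v 1)
      = co f (m + Finsupp.single v 1) + co g (m + Finsupp.single v 1) := map_add _ _ _
  rw [h]; ring

lemma pd_smul (v : DVar N) (c : ℂ) (f : DP N) : pd v (c • f) = c • pd v f := by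
  funext m
  show ((m v : ℂ) + 1) * (c * co f (m + Finsupp.single v 1))
      = c * (((m v : ℂ) + 1) * co f (m + Finsupp.single v 1))
  ring

lemma pd_zero (v : DVar N) : pd v (0 : DP N) = 0 := by
  funext m
  show ((m v : ℂ) + 1) * co (0 : DP N) (m + Finsupp.single v 1) = 0
  have : co (0 : DP N) (m + Finsupp.single v 1) = 0 := map_zero _
  rw [this, mul_zero]

lemma pd_one (v : DVar N) : pd v (1 : DP N) = 0 := by
  funext m
  show ((m v : ℂ) + 1) * co (1 : DP N) (m + Finsupp.single v 1) = 0
  have hne : m + Finsupp.single v 1 ≠ 0 := by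
    intro h
    have := DFunLike.congr_fun h v
    simp [Finsupp.single_apply] at this
  have : co (1 : DP N) (m + Finsupp.single v 1) = 0 := by
    rw [co, MvPowerSeries.coeff_one, if_neg hne]
  rw [this, mul_zero]

lemma pd_comm (v w : DVar N) (f : DP N) : pd v (pd w f) = pd w (pd v f) := by
  funext m
  show ((m v : ℂ) + 1) * co (pd w f) (m + Finsupp.single v 1)
      = ((m w : ℂ) + 1) * co (pd v f) (m + Finsupp.single w 1)
  rw [co_pd, co_pd]
  rw [show m + Finsupp.single v 1 + Finsupp.single w 1
      = m + Finsupp.single w 1 + Finsupp.single v 1 by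
    rw [add_assoc, add_assoc, add_comm (Finsupp.single v 1)]]
  have e1 := Finsupp.add_apply m (Finsupp.single v 1) w
  have e2 := Finsupp.add_apply m (Finsupp.single w 1) v
  rw [e1, e2]
  rcases eq_or_ne v w with rfl | h
  · ring
  · rw [Finsupp.single_apply, Finsupp.single_apply, if_neg h, if_neg h.symm]
    push_cast
    ring

lemma coeff_eq_co (m : DVar N →₀ ℕ) (f : DP N) : MvPowerSeries.coeff m f = co f m := rfl

lemma co_pdmul_left (v : DVar N) (f g : DP N) (m : DVar N →₀ ℕ) :
    co (pd v f * g) m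
      = ∑ p ∈ Finset.HasAntidiagonal.antidiagonal (m + Finsupp.single v 1 : DVar N →₀ ℕ),
          (p.1 v : ℂ) * (co f p.1 * co g p.2) := by
  classical
  have hfil : ∑ p ∈ Finset.HasAntidiagonal.antidiagonal (m + Finsupp.single v 1 : DVar N →₀ ℕ),
        (p.1 v : ℂ) * (co f p.1 * co g p.2)
      = ∑ p ∈ (Finset.HasAntidiagonal.antidiagonal (m + Finsupp.single v 1 : DVar N →₀ ℕ)).filter
          (fun p => p.1 v ≠ 0),
        (p.1 v : ℂ) * (co f p.1 * co g p.2) := by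
    refine (Finset.sum_filter_of_ne fun x _ hne => ?_).symm
    intro hv
    exact hne (by rw [hv, Nat.cast_zero, zero_mul])
  rw [hfil, co, MvPowerSeries.coeff_mul]
  simp only [coeff_eq_co]
  refine Finset.sum_bij'
    (fun (p : (DVar N →₀ ℕ) × (DVar N →₀ ℕ)) _ => (p.1 + Finsupp.single v 1, p.2))
    (fun (p : (DVar N →₀ ℕ) × (DVar N →₀ ℕ)) _ => (p.1 - Finsupp.single v 1, p.2))
    ?_ ?_ ?_ ?_ ?_
  · intro a ha
    have ha' := Finset.HasAntidiagonal.mem_antidiagonal.mp ha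
    rw [Finset.mem_filter, Finset.HasAntidiagonal.mem_antidiagonal]
    constructor
    · rw [add_right_comm, ha']
    · have h2 := Finsupp.add_apply a.1 (Finsupp.single v 1) v
      rw [h2, Finsupp.single_apply, if_pos rfl]
      omega
  · intro a ha
    obtain ⟨hs, hv⟩ := Finset.mem_filter.mp ha
    have hs' := Finset.HasAntidiagonal.mem_antidiagonal.mp hs
    rw [Finset.HasAntidiagonal.mem_antidiagonal]
    dsimp only
    ext x
    have hx := DFunLike.congr_fun hs' x
    have hv1 : 1 ≤ a.1 v := Nat.one_le_iff_ne_zero.mpr hv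
    rw [Finsupp.add_apply, Finsupp.tsub_apply]
    rw [Finsupp.add_apply, Finsupp.add_apply] at hx
    rcases eq_or_ne x v with rfl | hxv
    · rw [Finsupp.single_apply, if_pos rfl] at hx ⊢
      omega
    · rw [Finsupp.single_apply, if_neg (Ne.symm hxv)] at hx ⊢
      omega
  · intro a _
    dsimp only
    have h1 : a.1 + Finsupp.single v 1 - Finsupp.single v 1 = a.1 := by
      ext x
      rw [Finsupp.tsub_apply, Finsupp.add_apply]
      omega
    rw [h1]
  · intro a ha
    obtain ⟨_, hv⟩ := Finset.mem_filter.mp ha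
    have hv1 : 1 ≤ a.1 v := Nat.one_le_iff_ne_zero.mpr hv
    dsimp only
    have h1 : a.1 - Finsupp.single v 1 + Finsupp.single v 1 = a.1 := by
      ext x
      rw [Finsupp.add_apply, Finsupp.tsub_apply]
      rcases eq_or_ne x v with rfl | hxv
      · rw [Finsupp.single_apply, if_pos rfl]
        omega
      · rw [Finsupp.single_apply, if_neg (Ne.symm hxv)]
        omega
    rw [h1]
  · intro a _
    dsimp only
    rw [co_pd]
    have h2 := Finsupp.add_apply a.1 (Finsupp.single v 1) v
    rw [h2, Finsupp.single_apply, if_pos rfl]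
    push_cast
    ring

lemma co_pdmul_right (v : DVar N) (f g : DP N) (m : DVar N →₀ ℕ) :
    co (f * pd v g) m
      = ∑ p ∈ Finset.HasAntidiagonal.antidiagonal (m + Finsupp.single v 1 : DVar N →₀ ℕ),
          (p.2 v : ℂ) * (co f p.1 * co g p.2) := by
  classical
  have hfil : ∑ p ∈ Finset.HasAntidiagonal.antidiagonal (m + Finsupp.single v 1 : DVar N →₀ ℕ),
        (p.2 v : ℂ) * (co f p.1 * co g p.2)
      = ∑ p ∈ (Finset.HasAntidiagonal.antidiagonal (m + Finsupp.single v 1 : DVar N →₀ ℕ)).filter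
          (fun p => p.2 v ≠ 0),
        (p.2 v : ℂ) * (co f p.1 * co g p.2) := by
    refine (Finset.sum_filter_of_ne fun x _ hne => ?_).symm
    intro hv
    exact hne (by rw [hv, Nat.cast_zero, zero_mul])
  rw [hfil, co, MvPowerSeries.coeff_mul]
  simp only [coeff_eq_co]
  refine Finset.sum_bij'
    (fun (p : (DVar N →₀ ℕ) × (DVar N →₀ ℕ)) _ => (p.1, p.2 + Finsupp.single v 1))
    (fun (p : (DVar N →₀ ℕ) × (DVar N →₀ ℕ)) _ => (p.1, p.2 - Finsupp.single v 1))
    ?_ ?_ ?_ ?_ ?_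
  · intro a ha
    have ha' := Finset.HasAntidiagonal.mem_antidiagonal.mp ha
    rw [Finset.mem_filter, Finset.HasAntidiagonal.mem_antidiagonal]
    constructor
    · rw [← add_assoc, ha']
    · have h2 := Finsupp.add_apply a.2 (Finsupp.single v 1) v
      rw [h2, Finsupp.single_apply, if_pos rfl]
      omega
  · intro a ha
    obtain ⟨hs, hv⟩ := Finset.mem_filter.mp ha
    have hs' := Finset.HasAntidiagonal.mem_antidiagonal.mp hs
    rw [Finset.HasAntidiagonal.mem_antidiagonal]
    dsimp only
    ext x
    have hx := DFunLike.congr_fun hs' x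
    have hv1 : 1 ≤ a.2 v := Nat.one_le_iff_ne_zero.mpr hv
    rw [Finsupp.add_apply, Finsupp.tsub_apply]
    rw [Finsupp.add_apply, Finsupp.add_apply] at hx
    rcases eq_or_ne x v with rfl | hxv
    · rw [Finsupp.single_apply, if_pos rfl] at hx ⊢
      omega
    · rw [Finsupp.single_apply, if_neg (Ne.symm hxv)] at hx ⊢
      omega
  · intro a _
    dsimp only
    have h1 : a.2 + Finsupp.single v 1 - Finsupp.single v 1 = a.2 := by
      ext x
      rw [Finsupp.tsub_apply, Finsupp.add_apply]
      omega
    rw [h1]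
  · intro a ha
    obtain ⟨_, hv⟩ := Finset.mem_filter.mp ha
    have hv1 : 1 ≤ a.2 v := Nat.one_le_iff_ne_zero.mpr hv
    dsimp only
    have h1 : a.2 - Finsupp.single v 1 + Finsupp.single v 1 = a.2 := by
      ext x
      rw [Finsupp.add_apply, Finsupp.tsub_apply]
      rcases eq_or_ne x v with rfl | hxv
      · rw [Finsupp.single_apply, if_pos rfl]
        omega
      · rw [Finsupp.single_apply, if_neg (Ne.symm hxv)]
        omega
    rw [h1]
  · intro a _
    dsimp only
    rw [co_pd]
    have h2 := Finsupp.add_apply a.2 (Finsupp.single v 1) v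
    rw [h2, Finsupp.single_apply, if_pos rfl]
    push_cast
    ring

lemma pd_mul (v : DVar N) (f g : DP N) :
    pd v (f * g) = pd v f * g + f * pd v g := by
  funext m
  show ((m v : ℂ) + 1) * co (f * g) (m + Finsupp.single v 1)
      = co (pd v f * g) m + co (f * pd v g) m
  rw [co_pdmul_left, co_pdmul_right, ← Finset.sum_add_distrib, co,
    MvPowerSeries.coeff_mul, Finset.mul_sum]
  simp only [coeff_eq_co]
  refine Finset.sum_congr rfl fun p hp => ?_
  have hs := Finset.HasAntidiagonal.mem_antidiagonal.mp hp
  have hv : p.1 v + p.2 v = m v + 1 := by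
    have hx := DFunLike.congr_fun hs v
    rw [Finsupp.add_apply, Finsupp.add_apply, Finsupp.single_apply, if_pos rfl] at hx
    exact hx
  have hvc : (p.1 v : ℂ) + (p.2 v : ℂ) = (m v : ℂ) + 1 := by
    exact_mod_cast congrArg (Nat.cast : ℕ → ℂ) hv
  rw [← hvc]
  ring

lemma pd_dx (γ : Fin N) (f : DP N) :
    pd (Sum.inl (γ, 0)) (dx f) = dx (pd (Sum.inl (γ, 0)) f) := by
  classical
  funext m
  set w : DVar N := Sum.inl (γ, 0) with hw
  set n : DVar N →₀ ℕ := m + Finsupp.single w 1 with hn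
  show ((m w : ℂ) + 1) * co (dx f) n = co (dx (pd w f)) m
  rw [co_dx, co_dx]
  have hsub : m.support ⊆ n.support := by
    intro x hx
    rw [Finsupp.mem_support_iff] at hx ⊢
    rw [hn, Finsupp.add_apply]
    omega
  have hz : ∀ x ∈ n.support, x ∉ m.support →
      (match x with
        | Sum.inl (α, i + 1) =>
            co (pd (Sum.inl (α, i)) f) (n - Finsupp.single (Sum.inl (α, i + 1)) 1)
        | _ => (0 : ℂ)) = 0 := by
    intro x hx hnx
    have hxw : x = w := by
      rw [Finsupp.mem_support_iff, hn, Finsupp.add_apply] at hx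
      rw [Finsupp.mem_support_iff, not_not] at hnx
      rw [hnx] at hx
      by_contra hne
      rw [Finsupp.single_eq_of_ne' (fun h => hne h.symm)] at hx
      exact hx rfl
    subst hxw
    rfl
  rw [← Finset.sum_subset hsub hz, Finset.mul_sum]
  refine Finset.sum_congr rfl fun v hv => ?_
  rcases v with ⟨a, i⟩ | u
  · cases i with
    | zero =>
      show ((m w : ℂ) + 1) * (0 : ℂ) = (0 : ℂ)
      rw [mul_zero]
    | succ i =>
      show ((m w : ℂ) + 1) * co (pd (Sum.inl (a, i)) f)
          (n - Finsupp.single (Sum.inl (a, i + 1)) 1)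
        = co (pd (Sum.inl (a, i)) (pd w f)) (m - Finsupp.single (Sum.inl (a, i + 1)) 1)
      have hvw : (Sum.inl (a, i + 1) : DVar N) ≠ w := by
        rw [hw]
        simp
      have hm1 : 1 ≤ m (Sum.inl (a, i + 1)) :=
        Nat.one_le_iff_ne_zero.mpr (Finsupp.mem_support_iff.mp hv)
      have h1 : ((m - Finsupp.single (Sum.inl (a, i + 1)) 1 : DVar N →₀ ℕ)) w = m w := by
        rw [Finsupp.tsub_apply, Finsupp.single_eq_of_ne' hvw]
        omega
      have h2 : (m - Finsupp.single (Sum.inl (a, i + 1)) 1 : DVar N →₀ ℕ)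
            + Finsupp.single w 1
          = n - Finsupp.single (Sum.inl (a, i + 1)) 1 := by
        ext x
        rw [Finsupp.add_apply, Finsupp.tsub_apply, Finsupp.tsub_apply, hn,
          Finsupp.add_apply]
        rcases eq_or_ne x (Sum.inl (a, i + 1)) with rfl | hx1
        · rw [Finsupp.single_eq_same, Finsupp.single_eq_of_ne' (fun h => hvw h.symm)]
          omega
        · rw [Finsupp.single_eq_of_ne' (fun h => hx1 h.symm)]
          omega
      conv_rhs => rw [pd_comm, co_pd]
      rw [h1, h2]
  · show ((m w : ℂ) + 1) * (0 : ℂ) = (0 : ℂ)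
    rw [mul_zero]

lemma pd_dx_iter (γ : Fin N) (p : ℕ) (f : DP N) :
    pd (Sum.inl (γ, 0)) (dx^[p] f) = dx^[p] (pd (Sum.inl (γ, 0)) f) := by
  induction p generalizing f with
  | zero => rfl
  | succ p ih =>
    rw [Function.iterate_succ_apply, Function.iterate_succ_apply, ih (dx f), pd_dx]

lemma pd_sum {ι : Type*} (v : DVar N) (s : Finset ι) (f : ι → DP N) :
    pd v (∑ i ∈ s, f i) = ∑ i ∈ s, pd v (f i) := by
  classical
  induction s using Finset.induction with
  | empty => simpa using pd_zero v
  | insert a s ha ih =>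
    rw [Finset.sum_insert ha, Finset.sum_insert ha, pd_add, ih]

lemma mulFinsum (c : ℂ) (f : ℕ → ℂ) : c * ∑ᶠ i, f i = ∑ᶠ i, c * f i := by
  rcases eq_or_ne c 0 with rfl | hc
  · simp
  rcases (Function.support f).finite_or_infinite with hf | hf
  · exact mul_finsum f c
  · rw [finsum_of_infinite_support hf, mul_zero, finsum_of_infinite_support]
    have hsupp : (Function.support fun i => c * f i) = Function.support f := by
      ext i
      simp [hc]
    rw [hsupp]
    exact hf

lemma keyX [NeZero N] (η : Matrix (Fin N) (Fin N) ℂ) (ut : Fin N → DP N)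
    (hu1 : ∀ α : Fin N, pd (Sum.inl (0, 0)) (ut α) = if α = 0 then 1 else 0)
    (α β : Fin N) (g : DP N) (p q : ℕ) :
    pd (Sum.inl (0, 0)) (∑ μ : Fin N, ∑ ν : Fin N,
      pd (Sum.inl (μ, p)) (ut α) *
        dx^[p] (η μ ν •
          dx (((-1 : ℂ) ^ q) • dx^[q] (pd (Sum.inl (ν, q)) (ut β) * g))))
    = ∑ μ : Fin N, ∑ ν : Fin N,
      pd (Sum.inl (μ, p)) (ut α) *
        dx^[p] (η μ ν •
          dx (((-1 : ℂ) ^ q) • dx^[q] (pd (Sum.inl (ν, q)) (ut β)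
            * pd (Sum.inl (0, 0)) g))) := by
  rw [pd_sum]
  refine Finset.sum_congr rfl fun μ _ => ?_
  rw [pd_sum]
  refine Finset.sum_congr rfl fun ν _ => ?_
  rw [pd_mul]
  have hA : pd (Sum.inl ((0 : Fin N), 0)) (pd (Sum.inl (μ, p)) (ut α)) = 0 := by
    rw [pd_comm, hu1]
    split
    · exact pd_one _
    · exact pd_zero _
  rw [hA, zero_mul, zero_add]
  congr 1
  rw [pd_dx_iter, pd_smul, pd_dx, pd_smul, pd_dx_iter, pd_mul]
  have hB : pd (Sum.inl ((0 : Fin N), 0)) (pd (Sum.inl (ν, q)) (ut β)) = 0 := by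
    rw [pd_comm, hu1]
    split
    · exact pd_one _
    · exact pd_zero _
  rw [hB, zero_mul, zero_add]

end DP

open DP in
/-- independence of `ũ^1` of the transformed operator.  Let
`K = η∂_x` with `η` a constant symmetric nondegenerate matrix and let
`u^α ↦ ũ^α(u)` be a Miura transformation with `∂ũ^α/∂u^1 = δ^{α,1}`.  Then the
transformed operator `K_ũ` is independent of `ũ^1`: all of its coefficients
are annihilated by `∂/∂ũ^1`.  (Under the hypothesis `∂ũ^α/∂u^1 = δ^{α,1}`, the
derivations `∂/∂ũ^1` and `∂/∂u^1` coincide, and since `∂/∂u^1` commutes with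
`∂_x`, annihilation of all coefficients is equivalent to the operator
commuting with `∂/∂u^1`.) -/
theorem statement8 (N : ℕ) [NeZero N] (η : Matrix (Fin N) (Fin N) ℂ)
    (hsym : η.IsSymm) (hnd : IsUnit η.det)
    (ut : Fin N → DP N)
    (hmiura : ∀ α, IsHomog 0 (ut α) ∧ IsDiffPoly (ut α))
    (hval : ∀ α, co (ut α) 0 = 0)
    (hjac : Matrix.det
      (Matrix.of fun α β : Fin N => co (pd (Sum.inl (β, 0)) (ut α)) 0) ≠ 0)
    (hu1 : ∀ α : Fin N,
      pd (Sum.inl (0, 0)) (ut α) = if α = 0 then 1 else 0) :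
    ∀ (α β : Fin N) (g : DP N),
      pd (Sum.inl (0, 0)) (miuraEta η ut α β g)
        = miuraEta η ut α β (pd (Sum.inl (0, 0)) g) := by
  intro α β g
  funext m
  show co (pd (Sum.inl (0, 0)) (miuraEta η ut α β g)) m
      = co (miuraEta η ut α β (pd (Sum.inl (0, 0)) g)) m
  rw [co_pd]
  have hL : co (miuraEta η ut α β g)
        (m + Finsupp.single (Sum.inl ((0 : Fin N), 0)) 1 : DVar N →₀ ℕ)
      = ∑ᶠ p : ℕ, ∑ᶠ q : ℕ,
        co (∑ μ : Fin N, ∑ ν : Fin N,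
          pd (Sum.inl (μ, p)) (ut α) *
            dx^[p] (η μ ν •
              dx (((-1 : ℂ) ^ q) • dx^[q] (pd (Sum.inl (ν, q)) (ut β) * g))))
          (m + Finsupp.single (Sum.inl ((0 : Fin N), 0)) 1 : DVar N →₀ ℕ) := rfl
  have hR : co (miuraEta η ut α β (pd (Sum.inl (0, 0)) g)) m
      = ∑ᶠ p : ℕ, ∑ᶠ q : ℕ,
        co (∑ μ : Fin N, ∑ ν : Fin N,
          pd (Sum.inl (μ, p)) (ut α) *
            dx^[p] (η μ ν •
              dx (((-1 : ℂ) ^ q) • dx^[q] (pd (Sum.inl (ν, q)) (ut β)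
                * pd (Sum.inl (0, 0)) g)))) m := rfl
  rw [hL, hR, mulFinsum]
  refine finsum_congr fun p => ?_
  rw [mulFinsum]
  refine finsum_congr fun q => ?_
  rw [← co_pd, keyX η ut hu1 α β g p q]
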